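/- arXiv:2003.12541 — 5 statements merged into one kernel-verified Lean document; each statement's English description precedes it below -/
import Mathlib

section
/- Let p be a prime number and let l ≤ j be natural numbers. Then the p-adic valuation of the rational number (p·l)! · p^(j−l) / (l! · (j−l)!) is at least l + min(j−l, p−1). -/
lemma digits_sum_pos (p m : ℕ) (hm : m ≠ 0) :
    1 ≤ (p.digits m).sum := by
  have hnil : p.digits m ≠ [] := Nat.digits_ne_nil_iff_ne_zero.mpr hm
  have hlast := Nat.getLast_digit_ne_zero p hm
  have hmem : (p.digits m).getLast hnil ∈ p.digits m := List.getLast_mem hnil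
  calc 1 ≤ (p.digits m).getLast hnil := Nat.one_le_iff_ne_zero.mpr hlast
    _ ≤ (p.digits m).sum := List.single_le_sum (fun _ _ => Nat.zero_le _) _ hmem

lemma factorial_val_bound (p m : ℕ) (hp : p.Prime) :
    padicValNat p m.factorial + min m (p - 1) ≤ m := by
  haveI : Fact p.Prime := ⟨hp⟩
  rcases Nat.eq_zero_or_pos m with rfl | hm
  · simp
  have key := sub_one_mul_padicValNat_factorial (p := p) m
  have hs := digits_sum_pos p m hm.ne'
  have hsum : (p.digits m).sum ≤ m := Nat.digit_sum_le p m
  have hp2 := hp.two_le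
  by_cases hcase : m ≤ p - 1
  · have hv : padicValNat p m.factorial = 0 := by
      rw [padicValNat_factorial (b := 1) (by
        rw [Nat.lt_one_iff, Nat.log_eq_zero_iff]; left; omega)]
      simp
    omega
  · set v := padicValNat p m.factorial with hv
    have h1 : (p - 1) * v ≤ m - 1 := by omega
    have h2 : v ≤ m - (p - 1) := by
      by_contra hcon
      push_neg at hcon
      obtain ⟨k, hk⟩ := Nat.exists_eq_add_of_le (le_of_not_ge hcase : p - 1 ≤ m)
      have hvk : k + 1 ≤ v := by omega
      have c1 : (p - 1) * k + (p - 1) ≤ (p - 1) * v := by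
        have := Nat.mul_le_mul_left (p - 1) hvk
        rw [Nat.mul_add, Nat.mul_one] at this
        exact this
      have c2 : k ≤ (p - 1) * k := Nat.le_mul_of_pos_left k (by omega)
      have h4 : (p - 1) * k + (p - 1) ≤ m - 1 := le_trans c1 h1
      generalize hq : (p - 1) * k = q at c2 h4
      omega
    omega

/-- For a prime `p` and naturals `l ≤ j`, the `p`-adic valuation of the rational
number `(p*l)! * p^(j-l) / (l! * (j-l)!)` is at least `l + min (j-l) (p-1)`. -/
theorem padicValRat_factorial_estimate (p : ℕ) (hp : p.Prime) (l j : ℕ) (hlj : l ≤ j) :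
    ((l + min (j - l) (p - 1) : ℕ) : ℤ) ≤
      padicValRat p ((((p * l).factorial : ℚ) * (p : ℚ) ^ (j - l)) /
        ((l.factorial : ℚ) * ((j - l).factorial : ℚ))) := by
  haveI : Fact p.Prime := ⟨hp⟩
  set m := j - l with hm
  have hp0 : (p : ℚ) ≠ 0 := Nat.cast_ne_zero.mpr hp.pos.ne'
  have hf1 : ((p * l).factorial : ℚ) ≠ 0 := Nat.cast_ne_zero.mpr (Nat.factorial_ne_zero _)
  have hf2 : (l.factorial : ℚ) ≠ 0 := Nat.cast_ne_zero.mpr (Nat.factorial_ne_zero _)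
  have hf3 : (m.factorial : ℚ) ≠ 0 := Nat.cast_ne_zero.mpr (Nat.factorial_ne_zero _)
  rw [padicValRat.div (mul_ne_zero hf1 (pow_ne_zero _ hp0)) (mul_ne_zero hf2 hf3),
    padicValRat.mul hf1 (pow_ne_zero _ hp0), padicValRat.mul hf2 hf3,
    padicValRat.pow (p : ℚ), padicValRat.self hp.one_lt,
    padicValRat.of_nat, padicValRat.of_nat, padicValRat.of_nat]
  have hb := factorial_val_bound p m hp
  have hmin : min m (p - 1) ≤ m := min_le_left _ _
  rw [padicValNat_factorial_mul (p := p) l]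
  omega
end

section
/- Let R be a commutative ring, M an R-module, and x, y ∈ R. Assume: (i) ⋂ₙ xⁿM = 0 (M is x-adically separated); (ii) multiplication by x is injective on M; (iii) multiplication by y is injective on M/xM. Then multiplication by y is injective on M and multiplication by x is injective on M/yM. In other words, if (x, y) is a weakly regular sequence on M and M is x-adically separated, then (y, x) is a weakly regular sequence on M. -/
open Submodule Pointwise

private lemma mem_span_smul_top' {R : Type*} [CommRing R] {M : Type*} [AddCommGroup M]
    [Module R M] {x : R} {m : M} :
    m ∈ Ideal.span {x} • (⊤ : Submodule R M) ↔ ∃ m', x • m' = m := by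
  rw [Submodule.ideal_span_singleton_smul]
  constructor
  · intro h
    have : m ∈ ((x • (⊤ : Submodule R M) : Submodule R M) : Set M) := h
    rw [Submodule.coe_pointwise_smul] at this
    obtain ⟨n, -, rfl⟩ := this
    exact ⟨n, rfl⟩
  · rintro ⟨m', rfl⟩
    exact Submodule.smul_mem_pointwise_smul m' x ⊤ trivial

/-- If `(x, y)` is a weakly regular sequence on `M` and `M` is `x`-adically
separated, then `(y, x)` is a weakly regular sequence on `M`. -/
theorem weaklyRegular_swap {R : Type*} [CommRing R] {M : Type*} [AddCommGroup M]
    [Module R M] (x y : R)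
    (hsep : (⨅ n : ℕ, (Ideal.span {x}) ^ n • (⊤ : Submodule R M)) = ⊥)
    (hx : Function.Injective (fun m : M => x • m))
    (hy : Function.Injective
      (fun m : M ⧸ (Ideal.span {x} • (⊤ : Submodule R M)) => y • m)) :
    Function.Injective (fun m : M => y • m) ∧
    Function.Injective
      (fun m : M ⧸ (Ideal.span {y} • (⊤ : Submodule R M)) => x • m) := by
  -- x^n is injective on M
  have hxn : ∀ (n : ℕ) (a b : M), x ^ n • a = x ^ n • b → a = b := by
    intro n
    induction n with
    | zero => intro a b h; simpa using h
    | succ n ih =>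
      intro a b h
      rw [pow_succ, mul_comm, mul_smul, mul_smul] at h
      exact ih a b (hx h)
  -- key consequence of hy: if y • m ∈ xM then m ∈ xM
  have key : ∀ m : M, (∃ m', x • m' = y • m) → ∃ m', x • m' = m := by
    intro m hm
    have h0 : y • (Submodule.Quotient.mk m :
        M ⧸ (Ideal.span {x} • (⊤ : Submodule R M))) = y • (0 : _) := by
      rw [smul_zero, ← Submodule.Quotient.mk_smul, Submodule.Quotient.mk_eq_zero]
      exact mem_span_smul_top'.mpr hm
    have := hy h0
    rw [Submodule.Quotient.mk_eq_zero] at this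
    exact mem_span_smul_top'.mp this
  -- claim 1 : y injective on M
  have inj_y : Function.Injective (fun m : M => y • m) := by
    intro a b hab
    have hab' : y • (a - b) = 0 := by
      simp only at hab
      rw [smul_sub, hab, sub_self]
    set m := a - b with hm
    suffices h : m = 0 by
      have := sub_eq_zero.mp h
      exact this
    -- m ∈ x^n M for all n
    have hmem : ∀ n : ℕ, m ∈ (Ideal.span {x}) ^ n • (⊤ : Submodule R M) := by
      have main : ∀ n : ℕ, ∃ m' : M, x ^ n • m' = m ∧ y • m' = 0 := by
        intro n
        induction n with
        | zero => exact ⟨m, by simp, hab'⟩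
        | succ n ih =>
          obtain ⟨m', hm', hym'⟩ := ih
          obtain ⟨m'', hm''⟩ := key m' ⟨0, by rw [hym', smul_zero]⟩
          refine ⟨m'', ?_, ?_⟩
          · rw [pow_succ, mul_smul, hm'', hm']
          · have : x • (y • m'') = x • (0 : M) := by
              rw [smul_zero, smul_comm, hm'', hym']
            exact hx this
      intro n
      obtain ⟨m', hm', -⟩ := main n
      rw [Ideal.span_singleton_pow]
      exact mem_span_smul_top'.mpr ⟨m', hm'⟩
    have : m ∈ (⨅ n : ℕ, (Ideal.span {x}) ^ n • (⊤ : Submodule R M)) :=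
      Submodule.mem_iInf _ |>.mpr hmem
    rw [hsep] at this
    exact this
  refine ⟨inj_y, ?_⟩
  -- claim 2 : x injective on M / yM
  intro a b hab
  obtain ⟨a, rfl⟩ := Submodule.Quotient.mk_surjective _ a
  obtain ⟨b, rfl⟩ := Submodule.Quotient.mk_surjective _ b
  simp only [← Submodule.Quotient.mk_smul] at hab
  rw [← sub_eq_zero, ← Submodule.Quotient.mk_sub, Submodule.Quotient.mk_eq_zero] at hab ⊢
  rw [← smul_sub] at hab
  set m := a - b
  obtain ⟨n, hn⟩ := mem_span_smul_top'.mp hab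
  -- hn : y • n = x • m ; show m ∈ yM
  obtain ⟨n', hn'⟩ := key n ⟨m, hn.symm⟩
  have : x • m = x • (y • n') := by
    rw [← hn, ← hn', smul_comm]
  have hmy : m = y • n' := hx this
  exact mem_span_smul_top'.mpr ⟨n', hmy.symm⟩
end

section
/- Let A be a commutative ring, let a, b, b' ∈ A, and let n ≥ 1 be a natural number such that b' − bⁿ lies in the ideal aA. Assume that A is separated for the (a, b)-adic topology, i.e. ⋂ₘ (a, b)ᵐ = 0 where (a, b) is the ideal generated by a and b, and that (b, a) is a weakly regular sequence on A (b is a nonzerodivisor in A and a is a nonzerodivisor in A/bA). Then (a, b), (a, b') and (b', a) are all weakly regular sequences on A. -/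
/-- `(x, y)` is a weakly regular sequence on the commutative ring `A`:
`x` is a nonzerodivisor on `A` and `y` is a nonzerodivisor on `A ⧸ (x)`. -/
def WeaklyRegularPair {A : Type*} [CommRing A] (x y : A) : Prop :=
  (∀ z : A, x * z = 0 → z = 0) ∧
  (∀ z : A ⧸ Ideal.span {x}, Ideal.Quotient.mk (Ideal.span {x}) y * z = 0 → z = 0)

lemma weaklyRegularPair_iff {A : Type*} [CommRing A] (x y : A) :
    WeaklyRegularPair x y ↔
      (∀ z : A, x * z = 0 → z = 0) ∧
      (∀ z : A, y * z ∈ Ideal.span {x} → z ∈ Ideal.span {x}) := by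
  constructor
  · rintro ⟨h1, h2⟩
    refine ⟨h1, fun z hz => ?_⟩
    have := h2 (Ideal.Quotient.mk _ z) ?_
    · rwa [Ideal.Quotient.eq_zero_iff_mem] at this
    · rw [← map_mul, Ideal.Quotient.eq_zero_iff_mem]; exact hz
  · rintro ⟨h1, h2⟩
    refine ⟨h1, fun z hz => ?_⟩
    obtain ⟨w, rfl⟩ := Ideal.Quotient.mk_surjective z
    rw [← map_mul, Ideal.Quotient.eq_zero_iff_mem] at hz
    rw [Ideal.Quotient.eq_zero_iff_mem]
    exact h2 w hz

lemma weaklyRegularPair_swap {A : Type*} [CommRing A] {x y : A}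
    (h : WeaklyRegularPair x y)
    (hsep : (⨅ m : ℕ, (Ideal.span {x, y}) ^ m) = ⊥) : WeaklyRegularPair y x := by
  rw [weaklyRegularPair_iff] at h ⊢
  obtain ⟨h1, h2⟩ := h
  constructor
  · -- y is a nonzerodivisor
    intro z hz
    -- z = x^m * w with y * w = 0, for all m
    have key : ∀ m : ℕ, ∃ w : A, z = x ^ m * w ∧ y * w = 0 := by
      intro m
      induction m with
      | zero => exact ⟨z, by simp, hz⟩
      | succ m ih =>
        obtain ⟨w, hw, hyw⟩ := ih
        have hw' : w ∈ Ideal.span {x} := h2 w (by rw [hyw]; exact Ideal.zero_mem _)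
        obtain ⟨w', rfl⟩ := Ideal.mem_span_singleton.mp hw'
        refine ⟨w', by rw [hw, pow_succ]; ring, ?_⟩
        apply h1
        have : x * (y * w') = 0 := by rw [← hyw]; ring
        exact this
    have hz0 : z ∈ (⊥ : Ideal A) := by
      rw [← hsep, Ideal.mem_iInf]
      intro m
      obtain ⟨w, hw, -⟩ := key m
      rw [hw]
      exact Ideal.mul_mem_right _ _
        (Ideal.pow_mem_pow (Ideal.subset_span (Set.mem_insert x {y})) m)
    simpa using hz0
  · -- x is a nonzerodivisor mod y
    intro z hz
    obtain ⟨w, hw⟩ := Ideal.mem_span_singleton.mp hz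
    -- x * z = y * w
    have hw' : w ∈ Ideal.span {x} := by
      apply h2
      rw [← hw]
      exact Ideal.mem_span_singleton.mpr ⟨z, rfl⟩
    obtain ⟨w', rfl⟩ := Ideal.mem_span_singleton.mp hw'
    have : x * (z - y * w') = 0 := by rw [mul_sub, hw]; ring
    have hzw := h1 _ this
    have : z = y * w' := by linear_combination hzw
    rw [this]
    exact Ideal.mem_span_singleton.mpr ⟨w', rfl⟩

/-- If `b' ≡ bⁿ mod a`, `A` is `(a,b)`-adically separated, and `(b, a)` is a
weakly regular sequence on `A`, then `(a, b)`, `(a, b')` and `(b', a)` are all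
weakly regular sequences on `A`. -/
theorem weaklyRegularPair_of_congr {A : Type*} [CommRing A] (a b b' : A) (n : ℕ)
    (hn : 1 ≤ n) (hcong : b' - b ^ n ∈ Ideal.span {a})
    (hsep : (⨅ m : ℕ, (Ideal.span {a, b}) ^ m) = ⊥)
    (hba : WeaklyRegularPair b a) :
    WeaklyRegularPair a b ∧ WeaklyRegularPair a b' ∧ WeaklyRegularPair b' a := by
  have hsep' : (⨅ m : ℕ, (Ideal.span {b, a}) ^ m) = ⊥ := by
    rwa [Ideal.span_pair_comm]
  have hab : WeaklyRegularPair a b := weaklyRegularPair_swap hba hsep'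
  rw [weaklyRegularPair_iff] at hab
  obtain ⟨h1, h2⟩ := hab
  -- b^k is a nzd mod a for all k
  have h2pow : ∀ k : ℕ, ∀ z : A, b ^ k * z ∈ Ideal.span {a} → z ∈ Ideal.span {a} := by
    intro k
    induction k with
    | zero => intro z hz; simpa using hz
    | succ k ih =>
      intro z hz
      have e : b ^ (k + 1) * z = b ^ k * (b * z) := by ring
      rw [e] at hz
      exact h2 z (ih (b * z) hz)
  have h2' : ∀ z : A, b' * z ∈ Ideal.span {a} → z ∈ Ideal.span {a} := by
    intro z hz
    apply h2pow n
    have : b ^ n * z = b' * z - (b' - b ^ n) * z := by ring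
    rw [this]
    exact Ideal.sub_mem _ hz (Ideal.mul_mem_right _ _ hcong)
  have hab' : WeaklyRegularPair a b' := (weaklyRegularPair_iff a b').mpr ⟨h1, h2'⟩
  have hma : a ∈ Ideal.span {a, b} := Ideal.subset_span (Set.mem_insert a {b})
  have hmb' : b' ∈ Ideal.span {a, b} := by
    obtain ⟨c, hc⟩ := Ideal.mem_span_singleton.mp hcong
    have e : b' = b ^ n + a * c := by linear_combination hc
    rw [e]
    have hmb : b ∈ Ideal.span {a, b} := Ideal.subset_span (by simp)
    exact Ideal.add_mem _ (Ideal.pow_mem_of_mem _ hmb n hn) (Ideal.mul_mem_right _ _ hma)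
  have hle : Ideal.span {a, b'} ≤ Ideal.span {a, b} := by
    rw [Ideal.span_le]
    rintro x (rfl | rfl)
    · exact hma
    · exact hmb'
  have hsep'' : (⨅ m : ℕ, (Ideal.span {a, b'}) ^ m) = ⊥ := by
    rw [eq_bot_iff, ← hsep]
    exact le_iInf fun m => (iInf_le _ m).trans (Ideal.pow_right_mono hle m)
  exact ⟨(weaklyRegularPair_iff a b).mpr ⟨h1, h2⟩, hab', weaklyRegularPair_swap hab' hsep''⟩
end

section
/- Let p be a prime number and let V be a perfect commutative ring of characteristic p, i.e., the Frobenius x ↦ x^p is bijective on V. For every integer i ≥ 1, the map W(V) → W(V) sending x to F(x) − pⁱ·x, where F is the Witt vector Frobenius, is bijective. Equivalently, the map x ↦ x − pⁱ·F⁻¹(x) is bijective on W(V). -/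
namespace WittSolveAux

open WittVector Function

variable (p : ℕ) [hp : Fact p.Prime] (V : Type*) [CommRing V] [CharP V p]

local notation "𝕎" => WittVector p

theorem mul_p_pow (x : 𝕎 V) (i : ℕ) :
    x * (p : 𝕎 V) ^ i = verschiebung^[i] (frobenius^[i] x) := by
  induction i with
  | zero => simp
  | succ i ih =>
      rw [pow_succ, ← mul_assoc, ih, ← verschiebung_frobenius,
        iterate_succ_apply', iterate_succ_apply']
      congr 1
      exact ((verschiebung_frobenius_comm (p := p) (R := V)).iterate_left i _).symm

theorem iterate_verschiebung_coeff_lt (z : 𝕎 V) {i m : ℕ} (h : m < i) :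
    (verschiebung^[i] z).coeff m = 0 := by
  induction i generalizing m with
  | zero => omega
  | succ i ih =>
      rw [iterate_succ_apply']
      cases m with
      | zero => exact verschiebung_coeff_zero _
      | succ m => rw [verschiebung_coeff_succ]; exact ih (by omega)

theorem mul_p_pow_coeff_lt (x : 𝕎 V) {i m : ℕ} (h : m < i) :
    (x * (p : 𝕎 V) ^ i).coeff m = 0 := by
  rw [mul_p_pow]; exact iterate_verschiebung_coeff_lt p V _ h

theorem mul_p_pow_coeff_ge (x : 𝕎 V) (i k : ℕ) :
    (x * (p : 𝕎 V) ^ i).coeff (k + i) = x.coeff k ^ p ^ i := by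
  rw [mul_p_pow, iterate_verschiebung_coeff, iterate_frobenius_coeff]

theorem coeff_init (n m : ℕ) (x : 𝕎 V) :
    (init n x).coeff m = if m < n then x.coeff m else 0 := by simp [init, select, coeff_mk]

/-- The `n`-th coefficient of a sum depends only on coefficients `≤ n`. -/
theorem add_coeff_eq (a b b' : 𝕎 V) (n : ℕ) (h : ∀ m ≤ n, b.coeff m = b'.coeff m) :
    (a + b).coeff n = (a + b').coeff n := by
  have hb : init (n + 1) b = init (n + 1) b' := by
    ext m
    rw [coeff_init, coeff_init]
    split_ifs with hm
    · exact h m (by omega)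
    · rfl
  have h1 : (a + b).coeff n = (init (n + 1) (a + b)).coeff n := by
    rw [coeff_init, if_pos (by omega)]
  have h2 : (a + b').coeff n = (init (n + 1) (a + b')).coeff n := by
    rw [coeff_init, if_pos (by omega)]
  rw [h1, h2, init_add a b, init_add a b', hb]

/-- The `n`-th coefficient of `y + pⁱ·x` depends only on coefficients `< n` of `x`
(when `1 ≤ i`). -/
theorem key_coeff_eq (i : ℕ) (hi : 1 ≤ i) (y x x' : 𝕎 V) (n : ℕ)
    (h : ∀ m < n, x.coeff m = x'.coeff m) :
    (y + x * (p : 𝕎 V) ^ i).coeff n = (y + x' * (p : 𝕎 V) ^ i).coeff n := by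
  apply add_coeff_eq
  intro m hm
  rcases lt_or_ge m i with him | him
  · rw [mul_p_pow_coeff_lt p V _ him, mul_p_pow_coeff_lt p V _ him]
  · obtain ⟨k, rfl⟩ : ∃ k, m = k + i := ⟨m - i, by omega⟩
    rw [mul_p_pow_coeff_ge, mul_p_pow_coeff_ge, h k (by omega)]

variable (hV : Function.Bijective (fun x : V => x ^ p))

/-- Inverse of the Frobenius of `V`. -/
noncomputable def pthRoot (v : V) : V := (Equiv.ofBijective _ hV).symm v

theorem pthRoot_pow (v : V) : pthRoot p V hV v ^ p = v :=
  (Equiv.ofBijective (fun x : V => x ^ p) hV).apply_symm_apply v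

/-- The coefficients of the solution `x` of `F x = y + pⁱ x`, built by recursion. -/
noncomputable def approx (i : ℕ) (y : 𝕎 V) : ℕ → V
  | n =>
    pthRoot p V hV
      ((y + (WittVector.mk p fun m => if h : m < n then approx i y m else 0)
          * (p : 𝕎 V) ^ i).coeff n)
  termination_by n => n
  decreasing_by exact h

theorem frobenius_approx (i : ℕ) (hi : 1 ≤ i) (y : 𝕎 V) :
    frobenius (WittVector.mk p (approx p V hV i y)) =
      y + WittVector.mk p (approx p V hV i y) * (p : 𝕎 V) ^ i := by
  set x := WittVector.mk p (approx p V hV i y) with hx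
  ext n
  rw [coeff_frobenius_charP]
  have hxc : x.coeff n = approx p V hV i y n := rfl
  rw [hxc, approx, pthRoot_pow]
  exact key_coeff_eq p V i hi y _ x n (fun m hm => by
    simp only [WittVector.coeff_mk, dif_pos hm]; rfl)

end WittSolveAux

/-- For a perfect commutative ring `V` of characteristic `p` and `i ≥ 1`, the map
`x ↦ F(x) - pⁱ·x` on the ring of `p`-typical Witt vectors `W(V)` is bijective,
where `F` is the Witt vector Frobenius.  Equivalently, `x ↦ x - pⁱ·F⁻¹(x)` is
bijective on `W(V)`. -/
theorem wittVector_frobenius_sub_pow_bijective (p : ℕ) [Fact p.Prime]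
    (V : Type*) [CommRing V] [CharP V p]
    (hV : Function.Bijective (fun x : V => x ^ p)) (i : ℕ) (hi : 1 ≤ i) :
    Function.Bijective
      (fun x : WittVector p V =>
        WittVector.frobenius x - (p : WittVector p V) ^ i * x) := by
  constructor
  · -- injectivity
    intro x x' h
    simp only [sub_eq_sub_iff_add_eq_add] at h
    -- h : frobenius x + p^i * x' = frobenius x' + p^i * x  (roughly)
    have key : ∀ n, x.coeff n = x'.coeff n := by
      intro n
      induction n using Nat.strong_induction_on with
      | _ n ih =>
        have h2 : WittVector.frobenius x = (WittVector.frobenius x - (p : WittVector p V) ^ i * x)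
            + x * (p : WittVector p V) ^ i := by ring
        have h3 : WittVector.frobenius x' =
            (WittVector.frobenius x - (p : WittVector p V) ^ i * x)
            + x' * (p : WittVector p V) ^ i := by
          linear_combination -h
        have hc : (WittVector.frobenius x).coeff n = (WittVector.frobenius x').coeff n := by
          rw [h2, h3]
          exact WittSolveAux.key_coeff_eq p V i hi _ x x' n ih
        rw [WittVector.coeff_frobenius_charP, WittVector.coeff_frobenius_charP] at hc
        exact hV.injective hc
    exact WittVector.ext key
  · -- surjectivity
    intro y
    refine ⟨WittVector.mk p (WittSolveAux.approx p V hV i y), ?_⟩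
    have := WittSolveAux.frobenius_approx p V hV i hi y
    simp only at this ⊢
    rw [this]
    ring
end

section
/- Let p be a prime number and let k be a perfect commutative ring of characteristic p. Then the module of Kähler differentials Ω_{W(k)/ℤ} of the ring of p-typical Witt vectors W(k) over ℤ is p-divisible: every element ω satisfies ω = p·η for some η; equivalently Ω_{W(k)/ℤ} = p·Ω_{W(k)/ℤ}. -/
open WittVector

/-- In `W(k)` for `k` perfect of characteristic `p`, every element is of the
form `y ^ p + p * z`. -/
theorem wittVector_exists_pow_add (p : ℕ) [Fact p.Prime]
    (k : Type*) [CommRing k] [CharP k p]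
    (hk : Function.Bijective (fun x : k => x ^ p)) (x : WittVector p k) :
    ∃ y z : WittVector p k, x = y ^ p + p * z := by
  haveI : ExpChar k p := ExpChar.prime (Fact.out)
  haveI : PerfectRing k p := ⟨hk⟩
  obtain ⟨b, hb⟩ := hk.surjective (x.coeff 0)
  set y := WittVector.teichmuller p b with hy
  have hyp : (y ^ p).coeff 0 = x.coeff 0 := by
    have : y ^ p = WittVector.teichmuller p (b ^ p) := by
      rw [hy, map_pow]
    rw [this, WittVector.teichmuller_coeff_zero]; exact hb
  set x' := x - y ^ p with hx'
  have hx'0 : x'.coeff 0 = 0 := by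
    have : WittVector.constantCoeff x' = 0 := by
      rw [hx', map_sub]
      show (x.coeff 0) - ((y ^ p).coeff 0) = 0
      rw [hyp, sub_self]
    exact this
  -- x' is a Verschiebung
  set u := WittVector.mk p (fun n => x'.coeff (n + 1)) with hu
  have hVu : WittVector.verschiebung u = x' := by
    ext n
    cases n with
    | zero => rw [WittVector.verschiebung_coeff_zero, hx'0]
    | succ n =>
      rw [WittVector.verschiebung_coeff_succ, hu, WittVector.coeff_mk]
  obtain ⟨w, hw⟩ := (WittVector.frobenius_bijective p k).surjective u
  refine ⟨y, w, ?_⟩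
  have : WittVector.verschiebung (WittVector.frobenius w) = w * p :=
    WittVector.verschiebung_frobenius w
  rw [hw, hVu] at this
  rw [hx'] at this
  linear_combination this

/-- For a perfect commutative ring `k` of characteristic `p`, the module of
Kähler differentials of `W(k)` over `ℤ` is `p`-divisible: every element `ω`
satisfies `ω = p • η` for some `η`. -/
theorem kaehlerDifferential_wittVector_p_divisible (p : ℕ) [Fact p.Prime]
    (k : Type*) [CommRing k] [CharP k p]
    (hk : Function.Bijective (fun x : k => x ^ p)) :
    ∀ ω : KaehlerDifferential ℤ (WittVector p k),
      ∃ η : KaehlerDifferential ℤ (WittVector p k), ω = p • η := by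
  intro ω
  let f : KaehlerDifferential ℤ (WittVector p k) →ₗ[WittVector p k]
      KaehlerDifferential ℤ (WittVector p k) := (p : ℕ) • LinearMap.id
  suffices h : ω ∈ LinearMap.range f by
    obtain ⟨η, hη⟩ := h
    refine ⟨η, ?_⟩
    rw [← hη]
    rfl
  have hspan : Submodule.span (WittVector p k)
      (Set.range (KaehlerDifferential.D ℤ (WittVector p k))) = ⊤ :=
    KaehlerDifferential.span_range_derivation ℤ (WittVector p k)
  have hmem : ω ∈ Submodule.span (WittVector p k)
      (Set.range (KaehlerDifferential.D ℤ (WittVector p k))) := by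
    rw [hspan]; trivial
  refine Submodule.span_induction ?_ ?_ ?_ ?_ hmem
  · rintro _ ⟨x, rfl⟩
    obtain ⟨y, z, rfl⟩ := wittVector_exists_pow_add p k hk x
    set D := KaehlerDifferential.D ℤ (WittVector p k) with hD
    refine ⟨y ^ (p - 1) • D y + D z, ?_⟩
    have hf : f (y ^ (p - 1) • D y + D z)
        = (p : ℕ) • (y ^ (p - 1) • D y + D z) := rfl
    have hz : D ((p : WittVector p k) * z) = (p : ℕ) • D z := by
      rw [← nsmul_eq_mul, map_nsmul]
    rw [hf, smul_add, map_add, hz, hD, Derivation.leibniz_pow]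
  · exact ⟨0, map_zero f⟩
  · rintro a b _ _ ⟨a', rfl⟩ ⟨b', rfl⟩
    exact ⟨a' + b', map_add f a' b'⟩
  · rintro c a _ ⟨a', rfl⟩
    exact ⟨c • a', map_smul f c a'⟩
end
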